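/- Let n ≥ d ≥ 2 and t be positive integers and let ε ∈ (0,1), and suppose t > 2e(d² ln(ne/d) + d ln(d/ε) + 2d). Then there exists a probability distribution μ on {0,1}^n assigning probability 0 to the all-zero vector such that, if the rows of a random t×n binary matrix S are drawn i.i.d. from μ and B_j = {k ∈ {1,…,t} : S_{kj} = 1} for j ∈ {1,…,n}, the probability that there exist pairwise distinct indices i_1, …, i_d ∈ {1,…,n} with |B_{i_1} \ (B_{i_2} ∪ ⋯ ∪ B_{i_d})| ≤ 1 (i.e., the probability that the column design of S fails to be (d−1)-doubly disjunct in the indexed sense) is at most ε. -/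

import Mathlib

open Finset

namespace PCAux



/-- `1 + x ≤ exp ((x-1)/2)` for `x ≥ 8`. -/
lemma one_add_le_exp_half (x : ℝ) (hx : 8 ≤ x) : 1 + x ≤ Real.exp ((x - 1) / 2) := by
  set y : ℝ := (x - 1) / 2 with hy
  have hy3 : (3.5 : ℝ) ≤ y := by rw [hy]; linarith
  have h1 : y / 3 + 1 ≤ Real.exp (y / 3) := Real.add_one_le_exp (y / 3)
  have h0 : (0:ℝ) ≤ y / 3 + 1 := by linarith
  have h2 : (y / 3 + 1) ^ 3 ≤ Real.exp (y / 3) ^ 3 := pow_le_pow_left₀ h0 h1 3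
  have h3 : Real.exp (y / 3) ^ 3 = Real.exp y := by
    rw [← Real.exp_nat_mul]; congr 1; push_cast; ring
  have h4 : 1 + x ≤ (y / 3 + 1) ^ 3 := by nlinarith [hy3, mul_nonneg (mul_nonneg (sub_nonneg.2 hy3) (sub_nonneg.2 hy3)) (sub_nonneg.2 hy3), mul_nonneg (sub_nonneg.2 hy3) (sub_nonneg.2 hy3)]
  calc 1 + x ≤ (y/3+1)^3 := h4
    _ ≤ Real.exp (y/3) ^ 3 := h2
    _ = Real.exp y := h3

/-- `d^d ≤ e^d * d!`. -/
lemma pow_self_le_exp_mul_factorial : ∀ d : ℕ, (d:ℝ)^d ≤ Real.exp 1 ^ d * (Nat.factorial d) := by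
  intro d
  induction d with
  | zero => simp
  | succ d ih =>
    rcases Nat.eq_zero_or_pos d with h0 | hpos
    · subst h0; simp [Nat.factorial]
    · have hd : (0:ℝ) < d := by exact_mod_cast hpos
      have key : ((d:ℝ)+1)^d ≤ Real.exp 1 * (d:ℝ)^d := by
        have h1 : (1 + 1/(d:ℝ)) ≤ Real.exp (1/(d:ℝ)) := by
          have := Real.add_one_le_exp (1/(d:ℝ)); linarith
        have h2 : (1 + 1/(d:ℝ))^d ≤ Real.exp (1/(d:ℝ))^d :=
          pow_le_pow_left₀ (by positivity) h1 d
        have h3 : Real.exp (1/(d:ℝ))^d = Real.exp 1 := by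
          rw [← Real.exp_nat_mul]
          congr 1; field_simp
        have h4 : ((d:ℝ)+1)^d = (d:ℝ)^d * (1 + 1/(d:ℝ))^d := by
          rw [← mul_pow]; congr 1; field_simp
        rw [h4]
        calc (d:ℝ)^d * (1 + 1/(d:ℝ))^d ≤ (d:ℝ)^d * Real.exp 1 := by
              apply mul_le_mul_of_nonneg_left _ (by positivity)
              rw [← h3]; exact h2
          _ = Real.exp 1 * (d:ℝ)^d := by ring
      have hfact : (Nat.factorial (d+1) : ℝ) = ((d:ℝ)+1) * (Nat.factorial d) := by
        push_cast [Nat.factorial_succ]; ring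
      have : ((d:ℝ)+1)^(d+1) = ((d:ℝ)+1) * ((d:ℝ)+1)^d := by ring
      push_cast
      rw [this, hfact]
      calc ((d:ℝ)+1) * ((d:ℝ)+1)^d ≤ ((d:ℝ)+1) * (Real.exp 1 * (d:ℝ)^d) := by
            apply mul_le_mul_of_nonneg_left key (by positivity)
        _ ≤ ((d:ℝ)+1) * (Real.exp 1 * (Real.exp 1 ^ d * (Nat.factorial d))) := by
            apply mul_le_mul_of_nonneg_left _ (by positivity)
            apply mul_le_mul_of_nonneg_left ih (le_of_lt (Real.exp_pos 1))
        _ = Real.exp 1 ^ (d+1) * (((d:ℝ)+1) * (Nat.factorial d)) := by ring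
        _ = Real.exp 1 ^ (d+1) * (((d:ℝ)+1) * (Nat.factorial d)) := rfl



variable {α : Type*} [Fintype α] [DecidableEq α]

lemma sum_pi_prod (t : ℕ) (ν : α → ℝ) (C : Fin t → Finset α) :
    (∑ S : Fin t → α, if (∀ k, S k ∈ C k) then ∏ k, ν (S k) else 0)
      = ∏ k, ∑ v ∈ C k, ν v := by
  rw [Finset.prod_univ_sum, ← Finset.sum_filter]
  apply Finset.sum_congr _ (fun _ _ => rfl)
  ext S; simp [Fintype.mem_piFinset]

lemma tail_eq (t : ℕ) (ν : α → ℝ) (hsum : ∑ v, ν v = 1) (A : Finset α) :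
    (∑ S : Fin t → α,
        if ((Finset.univ.filter fun k : Fin t => S k ∈ A).card ≤ 1) then ∏ k, ν (S k) else 0)
      = (1 - ∑ v ∈ A, ν v)^t
        + (t.choose 1) * (∑ v ∈ A, ν v) * (1 - ∑ v ∈ A, ν v)^(t-1) := by
  set p := ∑ v ∈ A, ν v with hp
  have hAc : ∑ v ∈ Finset.univ \ A, ν v = 1 - p := by
    have := Finset.sum_sdiff (f := ν) (Finset.subset_univ A)
    rw [hsum] at this; linarith
  set Y : Finset (Finset (Fin t)) := Finset.univ.filter (fun G => G.card ≤ 1) with hY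
  have step1 : ∀ S : Fin t → α,
      (if ((Finset.univ.filter fun k : Fin t => S k ∈ A).card ≤ 1) then ∏ k, ν (S k) else 0)
        = ∑ G ∈ Y, if (Finset.univ.filter fun k : Fin t => S k ∈ A) = G then ∏ k, ν (S k) else 0 := by
    intro S
    rw [Finset.sum_ite_eq]
    congr 1
    simp [hY]
  rw [Finset.sum_congr rfl (fun S _ => step1 S), Finset.sum_comm]
  have step3 : ∀ G ∈ Y,
      (∑ S : Fin t → α, if (Finset.univ.filter fun k : Fin t => S k ∈ A) = G then ∏ k, ν (S k) else 0)
        = p ^ G.card * (1-p) ^ (t - G.card) := by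
    intro G _
    have hGiff : ∀ S : Fin t → α,
        ((Finset.univ.filter fun k : Fin t => S k ∈ A) = G)
          ↔ ∀ k, S k ∈ (if k ∈ G then A else Finset.univ \ A) := by
      intro S
      rw [Finset.ext_iff]
      constructor
      · intro h k
        by_cases hk : k ∈ G <;> simp only [hk, if_true, if_false, Finset.mem_sdiff, Finset.mem_univ, true_and]
        · exact (Finset.mem_filter.mp ((h k).mpr hk)).2
        · intro hmem; exact hk ((h k).mp (Finset.mem_filter.mpr ⟨Finset.mem_univ k, hmem⟩))
      · intro h k
        have := h k
        by_cases hk : k ∈ G <;> simp only [hk, if_true, if_false, Finset.mem_sdiff, Finset.mem_univ, true_and] at this <;>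
          simp [Finset.mem_filter, hk, this]
    calc (∑ S : Fin t → α, if (Finset.univ.filter fun k : Fin t => S k ∈ A) = G then ∏ k, ν (S k) else 0)
        = ∑ S : Fin t → α, if (∀ k, S k ∈ (if k ∈ G then A else Finset.univ \ A)) then ∏ k, ν (S k) else 0 := by
          apply Finset.sum_congr rfl; intro S _
          exact if_congr (hGiff S) rfl rfl
      _ = ∏ k : Fin t, ∑ v ∈ (if k ∈ G then A else Finset.univ \ A), ν v := sum_pi_prod t ν _
      _ = ∏ k : Fin t, (if k ∈ G then p else 1 - p) := by
          apply Finset.prod_congr rfl; intro k _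
          by_cases hk : k ∈ G <;> simp [hk, hAc] <;> exact hp.symm
      _ = p ^ G.card * (1-p) ^ (t - G.card) := by
          rw [Finset.prod_ite (fun _ => p) (fun _ => (1-p)), Finset.prod_const, Finset.prod_const]
          congr 2
          · rw [Finset.filter_univ_mem]
          · rw [← Finset.sdiff_eq_filter, Finset.card_sdiff_of_subset (Finset.subset_univ G), Finset.card_univ, Fintype.card_fin]
  rw [Finset.sum_congr rfl step3]
  have hYsplit : Y = (Finset.powersetCard 0 (Finset.univ : Finset (Fin t)))
      ∪ (Finset.powersetCard 1 (Finset.univ : Finset (Fin t))) := by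
    ext G
    simp [hY, Finset.mem_powersetCard, Nat.le_one_iff_eq_zero_or_eq_one]
  have hdisj : Disjoint (Finset.powersetCard 0 (Finset.univ : Finset (Fin t)))
      (Finset.powersetCard 1 (Finset.univ : Finset (Fin t))) := by
    rw [Finset.disjoint_left]
    intro G h0 h1
    rw [Finset.mem_powersetCard] at h0 h1
    omega
  rw [hYsplit, Finset.sum_union hdisj]
  have e0 : ∑ G ∈ Finset.powersetCard 0 (Finset.univ : Finset (Fin t)),
      p ^ G.card * (1-p) ^ (t - G.card) = (1-p)^t := by
    rw [Finset.sum_congr rfl (fun G hG => by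
      rw [(Finset.mem_powersetCard.mp hG).2]), Finset.sum_const, Finset.card_powersetCard]
    simp
  have e1 : ∑ G ∈ Finset.powersetCard 1 (Finset.univ : Finset (Fin t)),
      p ^ G.card * (1-p) ^ (t - G.card) = (t.choose 1) * (p * (1-p)^(t-1)) := by
    rw [Finset.sum_congr rfl (fun G hG => by
      rw [(Finset.mem_powersetCard.mp hG).2]), Finset.sum_const, Finset.card_powersetCard]
    simp [nsmul_eq_mul, Finset.card_univ]
  rw [e0, e1]
  ring




noncomputable def bern (n d : ℕ) (v : Fin n → Bool) : ℝ :=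
  ∏ j, if v j then ((d:ℝ))⁻¹ else 1 - (d:ℝ)⁻¹

noncomputable def mu (n d : ℕ) (v : Fin n → Bool) : ℝ :=
  if v = (fun _ => false) then 0
  else if v = (fun _ => true) then bern n d (fun _ => true) + bern n d (fun _ => false)
  else bern n d v

variable {n d : ℕ}

lemma q_nonneg (d : ℕ) : (0:ℝ) ≤ (d:ℝ)⁻¹ := by positivity

lemma q_le_one (hd : 2 ≤ d) : (d:ℝ)⁻¹ ≤ 1 := by
  have : (1:ℝ) ≤ (d:ℝ) := by exact_mod_cast Nat.one_le_of_lt hd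
  rw [inv_le_one_iff₀]; right; exact this

lemma bern_nonneg (hd : 2 ≤ d) (v : Fin n → Bool) : 0 ≤ bern n d v := by
  apply Finset.prod_nonneg
  intro j _
  by_cases h : v j
  · rw [if_pos h]; positivity
  · rw [if_neg h]
    have := q_le_one hd
    linarith

lemma mu_nonneg (hd : 2 ≤ d) (v : Fin n → Bool) : 0 ≤ mu n d v := by
  unfold mu
  split_ifs with h1 h2
  · exact le_refl 0
  · exact add_nonneg (bern_nonneg hd _) (bern_nonneg hd _)
  · exact bern_nonneg hd v

lemma bern_sum (hd : 2 ≤ d) : ∑ v : Fin n → Bool, bern n d v = 1 := by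
  have h := Finset.prod_univ_sum (fun _ : Fin n => (Finset.univ : Finset Bool))
    (fun _ b => if b then ((d:ℝ))⁻¹ else 1 - (d:ℝ)⁻¹)
  rw [Fintype.piFinset_univ] at h
  unfold bern
  rw [← h]
  have : ∀ j : Fin n, (∑ b : Bool, if b then ((d:ℝ))⁻¹ else 1 - (d:ℝ)⁻¹) = 1 := by
    intro j; rw [Fintype.sum_bool]; simp
  rw [Finset.prod_congr rfl (fun j _ => this j)]
  simp

lemma mu_sum (hn : 0 < n) (hd : 2 ≤ d) : ∑ v : Fin n → Bool, mu n d v = 1 := by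
  have hzo : (fun _ : Fin n => false) ≠ (fun _ : Fin n => true) := by
    intro h
    have := congrFun h ⟨0, hn⟩
    simp at this
  have hsub : ({(fun _ : Fin n => false), (fun _ : Fin n => true)} : Finset (Fin n → Bool)) ⊆ Finset.univ :=
    Finset.subset_univ _
  have key : ∀ f : (Fin n → Bool) → ℝ,
      ∑ v : Fin n → Bool, f v
        = ∑ v ∈ Finset.univ \ {(fun _ : Fin n => false), (fun _ : Fin n => true)}, f v
          + (f (fun _ => false) + f (fun _ => true)) := by
    intro f
    rw [← Finset.sum_sdiff hsub]
    congr 1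
    rw [Finset.sum_pair hzo]
  rw [key, ← bern_sum (n := n) hd, key (bern n d)]
  congr 1
  · apply Finset.sum_congr rfl
    intro v hv
    simp only [Finset.mem_sdiff, Finset.mem_insert, Finset.mem_singleton] at hv
    push_neg at hv
    unfold mu
    rw [if_neg hv.2.1, if_neg hv.2.2]
  · unfold mu
    rw [if_pos rfl, if_neg hzo.symm, if_pos rfl]
    ring

lemma rowprob (hd : 2 ≤ d) (a : Fin n) (T : Finset (Fin n)) (haT : a ∉ T)
    (hT : T.card = d - 1) :
    ∑ v ∈ Finset.univ.filter (fun v : Fin n → Bool => v a = true ∧ ∀ b ∈ T, v b = false), mu n d v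
      = (d:ℝ)⁻¹ * (1 - (d:ℝ)⁻¹) ^ (d - 1) := by
  have hTne : T.Nonempty := by
    rw [← Finset.card_pos, hT]; omega
  -- mu = bern on the filter set
  have hmb : ∀ v ∈ Finset.univ.filter (fun v : Fin n → Bool => v a = true ∧ ∀ b ∈ T, v b = false),
      mu n d v = bern n d v := by
    intro v hv
    rw [Finset.mem_filter] at hv
    obtain ⟨b, hb⟩ := hTne
    have h1 : v ≠ (fun _ => false) := by
      intro h; rw [h] at hv; simp at hv
    have h2 : v ≠ (fun _ => true) := by
      intro h; rw [h] at hv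
      exact Bool.true_eq_false.mp (hv.2.2 b hb) |>.elim
    unfold mu; rw [if_neg h1, if_neg h2]
  rw [Finset.sum_congr rfl hmb]
  -- the filter set is a piFinset
  set C : Fin n → Finset Bool := fun j => if j = a then {true} else if j ∈ T then {false} else Finset.univ with hC
  have hpi : Finset.univ.filter (fun v : Fin n → Bool => v a = true ∧ ∀ b ∈ T, v b = false)
      = Fintype.piFinset C := by
    ext v
    rw [Fintype.mem_piFinset, Finset.mem_filter]
    simp only [Finset.mem_univ, true_and, hC]
    constructor
    · intro ⟨h1, h2⟩ j
      by_cases hja : j = a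
      · subst hja; simp [h1]
      · by_cases hjT : j ∈ T
        · simp [hja, hjT, h2 j hjT]
        · simp [hja, hjT]
    · intro h
      constructor
      · have := h a; simpa using this
      · intro b hb
        have hba : b ≠ a := fun hc => haT (hc ▸ hb)
        have := h b
        rw [if_neg hba, if_pos hb] at this
        simpa using this
  rw [hpi]
  unfold bern
  rw [← Finset.prod_univ_sum C (fun _ b => if b then ((d:ℝ))⁻¹ else 1 - (d:ℝ)⁻¹)]
  have hterm : ∀ j : Fin n, (∑ b ∈ C j, if b then ((d:ℝ))⁻¹ else 1 - (d:ℝ)⁻¹)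
      = if j = a then (d:ℝ)⁻¹ else if j ∈ T then 1 - (d:ℝ)⁻¹ else 1 := by
    intro j
    by_cases hja : j = a
    · simp [hC, hja]
    · by_cases hjT : j ∈ T
      · simp [hC, hja, hjT]
      · rw [hC]; simp only [hja, hjT, if_false]
        rw [Fintype.sum_bool]; simp
  rw [Finset.prod_congr rfl (fun j _ => hterm j)]
  rw [← Finset.mul_prod_erase Finset.univ _ (Finset.mem_univ a)]
  rw [if_pos rfl]
  congr 1
  have hTsub : T ⊆ Finset.univ.erase a := by
    intro b hb
    exact Finset.mem_erase.mpr ⟨fun hc => haT (hc ▸ hb), Finset.mem_univ b⟩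
  rw [← Finset.prod_subset hTsub (fun x _ hx => by
    rcases eq_or_ne x a with h | h
    · exact absurd (h ▸ ‹x ∈ Finset.univ.erase a›) (by simp)
    · rw [if_neg h, if_neg hx])]
  rw [Finset.prod_congr rfl (fun x hx => by
    rw [if_neg (fun hc : x = a => haT (hc ▸ hx)), if_pos hx])]
  rw [Finset.prod_const, hT]





set_option maxHeartbeats 1000000 in
lemma final_arith (n d t : ℕ) (hd : 2 ≤ d) (hdn : d ≤ n) (ht : 0 < t)
    (ε : ℝ) (hε0 : 0 < ε) (hε1 : ε < 1)
    (htlb : 2 * Real.exp 1 *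
        ((d : ℝ) ^ 2 * Real.log (n * Real.exp 1 / d) + d * Real.log (d / ε) + 2 * d)
      < t) :
    (↑(n * (n-1).choose (d-1)) : ℝ) *
      ((1 - (d:ℝ)⁻¹ * (1 - (d:ℝ)⁻¹)^(d-1))^t
        + t * ((d:ℝ)⁻¹ * (1 - (d:ℝ)⁻¹)^(d-1)) * (1 - (d:ℝ)⁻¹ * (1 - (d:ℝ)⁻¹)^(d-1))^(t-1)) ≤ ε := by
  have hdR : (2:ℝ) ≤ (d:ℝ) := by exact_mod_cast hd
  have hdpos : (0:ℝ) < d := by linarith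
  have hd1' : (d:ℝ) - 1 ≠ 0 := by linarith
  have hd0 : (d:ℝ) ≠ 0 := ne_of_gt hdpos
  have hε0' : ε ≠ 0 := ne_of_gt hε0
  set q : ℝ := (d:ℝ)⁻¹ with hq
  have hq0 : 0 < q := by positivity
  have hqhalf : q ≤ 1/2 := by
    rw [hq, inv_le_comm₀ hdpos (by norm_num)]
    linarith
  have h1q0 : 0 < 1 - q := by linarith
  have h1q1 : 1 - q ≤ 1 := by linarith
  set p : ℝ := q * (1 - q)^(d-1) with hp
  have hp0 : 0 < p := by positivity
  have hphalf : p ≤ 1/2 := by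
    have h := pow_le_one₀ (le_of_lt h1q0) h1q1 (n := d-1)
    calc p ≤ q * 1 := mul_le_mul_of_nonneg_left h (le_of_lt hq0)
      _ ≤ 1/2 := by rw [mul_one]; exact hqhalf
  have h1p0 : (0:ℝ) ≤ 1 - p := by linarith
  have hcast : ((d - 1 : ℕ) : ℝ) = (d:ℝ) - 1 := by
    have h1 : 1 ≤ d := by omega
    push_cast [h1]; ring
  have hpe : (Real.exp 1 * d)⁻¹ ≤ p := by
    have hlog : Real.log ((1-q)⁻¹) ≤ ((d:ℝ)-1)⁻¹ := by
      have h1 := Real.log_le_sub_one_of_pos (x := (1-q)⁻¹) (by positivity)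
      have h2 : (1-q)⁻¹ - 1 = ((d:ℝ)-1)⁻¹ := by
        have h3 : 1 - q = ((d:ℝ)-1)/(d:ℝ) := by rw [hq]; field_simp
        rw [h3, inv_div]
        rw [div_sub_one hd1']
        congr 1; ring
      linarith
    have hexp : Real.exp (-1) ≤ (1-q)^(d-1) := by
      rw [← Real.exp_log (pow_pos h1q0 (d-1))]
      apply Real.exp_le_exp.mpr
      rw [Real.log_pow, hcast]
      have hlog2 : -(((d:ℝ)-1)⁻¹) ≤ Real.log (1-q) := by
        have h4 := hlog
        rw [Real.log_inv] at h4
        linarith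
      calc (-1 : ℝ) = ((d:ℝ)-1) * (-(((d:ℝ)-1)⁻¹)) := by
            rw [mul_neg, mul_inv_cancel₀ hd1']
        _ ≤ ((d:ℝ)-1) * Real.log (1-q) :=
            mul_le_mul_of_nonneg_left hlog2 (by linarith)
    have h5 : (Real.exp 1)⁻¹ ≤ (1-q)^(d-1) := by
      rw [← Real.exp_neg]; exact hexp
    calc (Real.exp 1 * d)⁻¹ = q * (Real.exp 1)⁻¹ := by
          rw [hq, mul_inv]; ring
      _ ≤ q * (1-q)^(d-1) := mul_le_mul_of_nonneg_left h5 (le_of_lt hq0)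
      _ = p := hp.symm
  set X : ℝ := (n:ℝ) * Real.exp 1 / d with hX
  have hnR : (0:ℝ) < n := by
    have : (d:ℝ) ≤ n := by exact_mod_cast hdn
    linarith
  have hXpos : 0 < X := by rw [hX]; positivity
  have hXe : Real.exp 1 ≤ X := by
    rw [hX, le_div_iff₀ hdpos]
    have hnd : (d:ℝ) ≤ n := by exact_mod_cast hdn
    nlinarith [Real.exp_pos 1]
  have hlogX : 1 ≤ Real.log X :=
    le_trans (le_of_eq (Real.log_exp 1).symm) (Real.log_le_log (Real.exp_pos 1) hXe)
  have hlogdε : 0 ≤ Real.log ((d:ℝ)/ε) := by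
    apply Real.log_nonneg
    rw [le_div_iff₀ hε0]; linarith
  set L : ℝ := (d:ℝ) * Real.log X + Real.log ((d:ℝ)/ε) + 2 with hL
  have hL4 : 4 ≤ L := by
    have h6 : (d:ℝ) * 1 ≤ (d:ℝ) * Real.log X := mul_le_mul_of_nonneg_left hlogX (by linarith)
    rw [hL]; nlinarith
  set x : ℝ := p * t with hx
  clear_value q p X L x
  have htpos : (0:ℝ) < t := by exact_mod_cast ht
  have hx2L : 2 * L < x := by
    rw [hx]
    have hLe : (d:ℝ) * L = (d:ℝ)^2 * Real.log X + (d:ℝ) * Real.log ((d:ℝ)/ε) + 2*(d:ℝ) := by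
      rw [hL]; ring
    have h1 : 2 * Real.exp 1 * ((d:ℝ) * L) < t := by rw [hLe]; exact htlb
    have hedpos : (0:ℝ) < (Real.exp 1 * (d:ℝ))⁻¹ := by
      apply inv_pos.mpr
      nlinarith [Real.exp_pos 1]
    have h2 : (Real.exp 1 * (d:ℝ))⁻¹ * (2 * Real.exp 1 * ((d:ℝ) * L)) = 2 * L := by
      have hed : Real.exp 1 * (d:ℝ) ≠ 0 := ne_of_gt (by nlinarith [Real.exp_pos 1])
      rw [show 2 * Real.exp 1 * ((d:ℝ) * L) = (Real.exp 1 * (d:ℝ)) * (2 * L) by ring,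
        ← mul_assoc, inv_mul_cancel₀ hed, one_mul]
    calc 2 * L = (Real.exp 1 * (d:ℝ))⁻¹ * (2 * Real.exp 1 * ((d:ℝ) * L)) := h2.symm
      _ < (Real.exp 1 * (d:ℝ))⁻¹ * t := mul_lt_mul_of_pos_left h1 hedpos
      _ ≤ p * t := mul_le_mul_of_nonneg_right hpe (le_of_lt htpos)
  have hx8 : 8 ≤ x := by linarith
  have hcastt : ((t - 1 : ℕ) : ℝ) = (t:ℝ) - 1 := by
    have h1 : 1 ≤ t := ht
    push_cast [h1]; ring
  have htail : (1 - p)^t + t * p * (1-p)^(t-1) ≤ Real.exp (-L) := by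
    have h1 : (1-p)^t ≤ (1-p)^(t-1) := by
      apply pow_le_pow_of_le_one h1p0 (by linarith) (by omega)
    have hpow : (0:ℝ) ≤ (1-p)^(t-1) := pow_nonneg h1p0 _
    have hxx : (t:ℝ) * p * (1-p)^(t-1) = x * (1-p)^(t-1) := by rw [hx]; ring
    have hstep : (1 - p)^t + t * p * (1-p)^(t-1) ≤ (1 + x) * (1-p)^(t-1) := by
      nlinarith [h1, hxx, hpow]
    have hexpb : (1-p)^(t-1) ≤ Real.exp (-(p * ((t:ℝ)-1))) := by
      have h2 : 1 - p ≤ Real.exp (-p) := by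
        have := Real.add_one_le_exp (-p); linarith
      calc (1-p)^(t-1) ≤ Real.exp (-p) ^ (t-1) := pow_le_pow_left₀ h1p0 h2 (t-1)
        _ = Real.exp (((t-1:ℕ):ℝ) * (-p)) := by rw [Real.exp_nat_mul]
        _ = Real.exp (-(p * ((t:ℝ)-1))) := by rw [hcastt]; ring_nf
    have h1x : 1 + x ≤ Real.exp ((x-1)/2) := one_add_le_exp_half x hx8
    calc (1 - p)^t + t * p * (1-p)^(t-1) ≤ (1 + x) * (1-p)^(t-1) := hstep
      _ ≤ Real.exp ((x-1)/2) * Real.exp (-(p * ((t:ℝ)-1))) :=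
          mul_le_mul h1x hexpb hpow (by positivity)
      _ = Real.exp ((x-1)/2 + -(p * ((t:ℝ)-1))) := (Real.exp_add _ _).symm
      _ ≤ Real.exp (-L) := by
          apply Real.exp_le_exp.mpr
          have hpt : p * ((t:ℝ)-1) = x - p := by rw [hx]; ring
          rw [hpt]
          have h9 : L - x/2 < 0 := by linarith
          nlinarith [hphalf, h9]
  have hcount : (↑(n * (n-1).choose (d-1)) : ℝ) ≤ (d:ℝ) * X^d := by
    have hnat : n * (n-1).choose (d-1) = n.choose d * d := by
      have h1 := Nat.add_one_mul_choose_eq (n-1) (d-1)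
      have hn1 : n - 1 + 1 = n := by omega
      have hd1 : d - 1 + 1 = d := by omega
      rw [hn1, hd1] at h1
      omega
    rw [hnat]
    push_cast
    have hch : (n.choose d : ℝ) ≤ (n:ℝ)^d / (Nat.factorial d) := Nat.choose_le_pow_div d n
    have hfac : ((d:ℝ))^d ≤ Real.exp 1 ^ d * (Nat.factorial d) := pow_self_le_exp_mul_factorial d
    have hfacpos : (0:ℝ) < (Nat.factorial d : ℝ) := by exact_mod_cast Nat.factorial_pos d
    have hXd : (n:ℝ)^d / (Nat.factorial d) ≤ X^d := by
      rw [hX, div_pow, div_le_div_iff₀ hfacpos (pow_pos hdpos d)]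
      calc (n:ℝ)^d * (d:ℝ)^d ≤ (n:ℝ)^d * (Real.exp 1 ^ d * (Nat.factorial d)) :=
            mul_le_mul_of_nonneg_left hfac (by positivity)
        _ = ((n:ℝ) * Real.exp 1)^d * (Nat.factorial d) := by rw [mul_pow]; ring
    calc (n.choose d : ℝ) * d ≤ ((n:ℝ)^d / (Nat.factorial d)) * d :=
          mul_le_mul_of_nonneg_right hch (by positivity)
      _ ≤ X^d * d := mul_le_mul_of_nonneg_right hXd (by positivity)
      _ = (d:ℝ) * X^d := by ring
  have hfinal : (d:ℝ) * X^d * Real.exp (-L) = ε / Real.exp 2 := by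
    have e1 : Real.exp ((d:ℝ) * Real.log X) = X^d := by
      rw [Real.exp_nat_mul, Real.exp_log hXpos]
    have e2 : Real.exp (Real.log ((d:ℝ)/ε)) = (d:ℝ)/ε := Real.exp_log (div_pos hdpos hε0)
    have hXd0 : X^d ≠ 0 := ne_of_gt (pow_pos hXpos d)
    have hexp2 : Real.exp 2 ≠ 0 := ne_of_gt (Real.exp_pos 2)
    rw [hL, show -((d:ℝ) * Real.log X + Real.log ((d:ℝ)/ε) + 2)
        = ((d:ℝ) * Real.log X + Real.log ((d:ℝ)/ε) + 2) * (-1) by ring]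
    rw [show ((d:ℝ) * Real.log X + Real.log ((d:ℝ)/ε) + 2) * (-1)
        = -((d:ℝ) * Real.log X) + (-(Real.log ((d:ℝ)/ε))) + (-2) by ring]
    rw [Real.exp_add, Real.exp_add, Real.exp_neg ((d:ℝ) * Real.log X), Real.exp_neg (Real.log ((d:ℝ)/ε)),
      Real.exp_neg (2:ℝ), e1, e2]
    field_simp
  have hterm0 : (0:ℝ) ≤ (1 - p)^t + t * p * (1-p)^(t-1) :=
    add_nonneg (pow_nonneg h1p0 t)
      (mul_nonneg (mul_nonneg (le_of_lt htpos) (le_of_lt hp0)) (pow_nonneg h1p0 _))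
  have hexp2ge : (1:ℝ) ≤ Real.exp 2 := by nlinarith [Real.add_one_le_exp (2:ℝ)]
  calc (↑(n * (n-1).choose (d-1)) : ℝ) * ((1 - p)^t + t * p * (1-p)^(t-1))
      ≤ ((d:ℝ) * X^d) * Real.exp (-L) := by
        apply mul_le_mul hcount htail hterm0
        exact mul_nonneg (le_of_lt hdpos) (pow_nonneg (le_of_lt hXpos) d)
    _ = ε / Real.exp 2 := hfinal
    _ ≤ ε := div_le_self (le_of_lt hε0) hexp2ge


end PCAux

open Classical in
/-- Theorem 5 (performance of the probabilistic construction): if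
`t > 2e(d² ln(ne/d) + d ln(d/ε) + 2d)`, then there is a probability distribution `μ` on
`{0,1}^n` assigning probability 0 to the all-zero vector such that, when the rows of a
random `t × n` binary matrix `S` are drawn i.i.d. from `μ` and
`B j = {k : S k j = 1}`, the probability that the column design fails to be
`(d−1)`-doubly disjunct in the indexed sense (i.e. that some pairwise distinct indices
`i 0, …, i (d-1)` satisfy `|B (i 0) \ (B (i 1) ∪ ⋯ ∪ B (i (d-1)))| ≤ 1`) is at most
`ε`. -/
theorem probabilistic_construction (n d t : ℕ) (hd : 2 ≤ d) (hdn : d ≤ n) (ht : 0 < t)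
    (ε : ℝ) (hε0 : 0 < ε) (hε1 : ε < 1)
    (htlb : 2 * Real.exp 1 *
        ((d : ℝ) ^ 2 * Real.log (n * Real.exp 1 / d) + d * Real.log (d / ε) + 2 * d)
      < t) :
    ∃ μ : (Fin n → Bool) → ℝ,
      (∀ v, 0 ≤ μ v) ∧
      (∑ v : Fin n → Bool, μ v) = 1 ∧
      μ (fun _ => false) = 0 ∧
      (∑ S : Fin t → Fin n → Bool,
        if ∃ i : Fin d → Fin n, Function.Injective i ∧
            ((Finset.univ.filter fun k => S k (i ⟨0, by omega⟩) = true) \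
              Finset.univ.biUnion (fun j : Fin d =>
                if j = ⟨0, by omega⟩ then ∅
                else Finset.univ.filter fun k => S k (i j) = true)).card ≤ 1
        then ∏ k : Fin t, μ (S k) else 0) ≤ ε := by
  have hn : 0 < n := by omega
  refine ⟨PCAux.mu n d, PCAux.mu_nonneg hd, PCAux.mu_sum hn hd, ?_, ?_⟩
  · unfold PCAux.mu; rw [if_pos rfl]
  · have hwnn : ∀ S : Fin t → Fin n → Bool, 0 ≤ ∏ k, PCAux.mu n d (S k) :=
      fun S => Finset.prod_nonneg (fun k _ => PCAux.mu_nonneg hd _)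
    set A : Fin n → Finset (Fin n) → Finset (Fin n → Bool) :=
      fun a T => Finset.univ.filter (fun v => v a = true ∧ ∀ b ∈ T, v b = false) with hA
    set Y : Finset ((_ : Fin n) × Finset (Fin n)) :=
      Finset.univ.sigma (fun a => Finset.powersetCard (d-1) (Finset.univ.erase a)) with hY
    have hmemA : ∀ (a : Fin n) (T : Finset (Fin n)) (v : Fin n → Bool),
        v ∈ A a T ↔ (v a = true ∧ ∀ b ∈ T, v b = false) := by
      intro a T v
      rw [hA]
      simp [Finset.mem_filter]
    have hYprop : ∀ y ∈ Y, y.1 ∉ y.2 ∧ y.2.card = d - 1 := by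
      intro y hy
      rw [hY, Finset.mem_sigma] at hy
      obtain ⟨-, h2⟩ := hy
      rw [Finset.mem_powersetCard] at h2
      refine ⟨fun hmem => ?_, h2.2⟩
      have h3 := h2.1 hmem
      rw [Finset.mem_erase] at h3
      exact h3.1 rfl
    have hYcard : Y.card = n * (n-1).choose (d-1) := by
      rw [hY, Finset.card_sigma]
      have h1 : ∀ a : Fin n,
          (Finset.powersetCard (d-1) (Finset.univ.erase a)).card = (n-1).choose (d-1) := by
        intro a
        rw [Finset.card_powersetCard, Finset.card_erase_of_mem (Finset.mem_univ a),
          Finset.card_univ, Fintype.card_fin]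
      rw [Finset.sum_congr rfl (fun a _ => h1 a), Finset.sum_const, smul_eq_mul,
        Finset.card_univ, Fintype.card_fin]
    have hrow : ∀ y ∈ Y, ∑ v ∈ A y.1 y.2, PCAux.mu n d v
        = (d:ℝ)⁻¹ * (1-(d:ℝ)⁻¹)^(d-1) := by
      intro y hy
      have h := hYprop y hy
      have := PCAux.rowprob hd y.1 y.2 h.1 h.2
      rw [hA]
      exact this
    calc (∑ S : Fin t → Fin n → Bool,
        if ∃ i : Fin d → Fin n, Function.Injective i ∧
            ((Finset.univ.filter fun k => S k (i ⟨0, by omega⟩) = true) \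
              Finset.univ.biUnion (fun j : Fin d =>
                if j = ⟨0, by omega⟩ then ∅
                else Finset.univ.filter fun k => S k (i j) = true)).card ≤ 1
        then ∏ k : Fin t, PCAux.mu n d (S k) else 0)
        ≤ ∑ S : Fin t → Fin n → Bool, ∑ y ∈ Y,
            (if ((Finset.univ.filter fun k : Fin t => S k ∈ A y.1 y.2).card ≤ 1)
              then ∏ k : Fin t, PCAux.mu n d (S k) else 0) := by
          apply Finset.sum_le_sum
          intro S _
          split_ifs with hB
          · obtain ⟨i, hinj, hcard⟩ := hB
            have hz : (0:ℕ) < d := by omega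
            set z : Fin d := ⟨0, hz⟩ with hzdef
            set a : Fin n := i z with ha
            set T : Finset (Fin n) := (Finset.univ.erase z).image i with hT
            have hTcard : T.card = d - 1 := by
              rw [hT, Finset.card_image_of_injOn (Function.Injective.injOn hinj),
                Finset.card_erase_of_mem (Finset.mem_univ z), Finset.card_univ, Fintype.card_fin]
            have haT : a ∉ T := by
              rw [hT]
              intro hmem
              rw [Finset.mem_image] at hmem
              obtain ⟨j, hj, hji⟩ := hmem
              rw [Finset.mem_erase] at hj
              exact hj.1 (hinj hji)
            have hyY : (⟨a, T⟩ : (_ : Fin n) × Finset (Fin n)) ∈ Y := by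
              rw [hY, Finset.mem_sigma]
              refine ⟨Finset.mem_univ a, Finset.mem_powersetCard.mpr ⟨?_, hTcard⟩⟩
              intro b hb
              rw [Finset.mem_erase]
              refine ⟨?_, Finset.mem_univ b⟩
              intro hba
              apply haT
              show (⟨a, T⟩ : (_ : Fin n) × Finset (Fin n)).fst ∈ T
              rw [← hba]
              exact hb
            have hset : (Finset.univ.filter fun k : Fin t => S k ∈ A a T)
                = ((Finset.univ.filter fun k => S k (i z) = true) \
                    Finset.univ.biUnion (fun j : Fin d => if j = z then ∅
                      else Finset.univ.filter fun k => S k (i j) = true)) := by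
              ext k
              rw [Finset.mem_filter, Finset.mem_sdiff, Finset.mem_biUnion, hmemA]
              constructor
              · rintro ⟨-, h1, h2⟩
                refine ⟨Finset.mem_filter.mpr ⟨Finset.mem_univ k, h1⟩, ?_⟩
                rintro ⟨j, -, hj⟩
                by_cases hjz : j = z
                · rw [if_pos hjz] at hj
                  exact Finset.notMem_empty k hj
                · rw [if_neg hjz] at hj
                  rw [Finset.mem_filter] at hj
                  have hbT : i j ∈ T := by
                    rw [hT]
                    exact Finset.mem_image_of_mem i
                      (Finset.mem_erase.mpr ⟨hjz, Finset.mem_univ j⟩)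
                  have hfalse := h2 (i j) hbT
                  rw [hfalse] at hj
                  exact Bool.false_ne_true hj.2
              · rintro ⟨h1, h2⟩
                rw [Finset.mem_filter] at h1
                refine ⟨Finset.mem_univ k, h1.2, ?_⟩
                intro b hb
                rw [hT, Finset.mem_image] at hb
                obtain ⟨j, hj, rfl⟩ := hb
                rw [Finset.mem_erase] at hj
                by_contra hfalse
                have htrue : S k (i j) = true := by
                  cases hSk : S k (i j)
                  · exact absurd hSk hfalse
                  · rfl
                apply h2
                exact ⟨j, Finset.mem_univ j, by
                  rw [if_neg hj.1]
                  exact Finset.mem_filter.mpr ⟨Finset.mem_univ k, htrue⟩⟩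
            have hcard' : (Finset.univ.filter fun k : Fin t => S k ∈ A a T).card ≤ 1 := by
              rw [hset]
              exact hcard
            calc (∏ k : Fin t, PCAux.mu n d (S k))
                = (if ((Finset.univ.filter fun k : Fin t =>
                      S k ∈ A (⟨a, T⟩ : (_ : Fin n) × Finset (Fin n)).1
                        (⟨a, T⟩ : (_ : Fin n) × Finset (Fin n)).2).card ≤ 1)
                    then ∏ k : Fin t, PCAux.mu n d (S k) else 0) := (if_pos hcard').symm
              _ ≤ ∑ y ∈ Y, (if ((Finset.univ.filter fun k : Fin t => S k ∈ A y.1 y.2).card ≤ 1)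
                    then ∏ k : Fin t, PCAux.mu n d (S k) else 0) := by
                  apply Finset.single_le_sum (f := fun y : (_ : Fin n) × Finset (Fin n) =>
                    if ((Finset.univ.filter fun k : Fin t => S k ∈ A y.1 y.2).card ≤ 1)
                      then ∏ k : Fin t, PCAux.mu n d (S k) else 0) _ hyY
                  intro y _
                  split_ifs with h
                  · exact hwnn S
                  · exact le_refl 0
          · apply Finset.sum_nonneg
            intro y _
            split_ifs with h
            · exact hwnn S
            · exact le_refl 0
      _ = ∑ y ∈ Y, ∑ S : Fin t → Fin n → Bool,
            (if ((Finset.univ.filter fun k : Fin t => S k ∈ A y.1 y.2).card ≤ 1)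
              then ∏ k : Fin t, PCAux.mu n d (S k) else 0) := Finset.sum_comm
      _ = ∑ y ∈ Y, ((1 - (d:ℝ)⁻¹ * (1-(d:ℝ)⁻¹)^(d-1))^t
            + (t.choose 1) * ((d:ℝ)⁻¹ * (1-(d:ℝ)⁻¹)^(d-1))
              * (1 - (d:ℝ)⁻¹ * (1-(d:ℝ)⁻¹)^(d-1))^(t-1)) := by
          apply Finset.sum_congr rfl
          intro y hy
          rw [PCAux.tail_eq t (PCAux.mu n d) (PCAux.mu_sum hn hd) (A y.1 y.2), hrow y hy]
      _ = (Y.card : ℝ) * ((1 - (d:ℝ)⁻¹ * (1-(d:ℝ)⁻¹)^(d-1))^t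
            + t * ((d:ℝ)⁻¹ * (1-(d:ℝ)⁻¹)^(d-1))
              * (1 - (d:ℝ)⁻¹ * (1-(d:ℝ)⁻¹)^(d-1))^(t-1)) := by
          rw [Finset.sum_const, nsmul_eq_mul, Nat.choose_one_right]
      _ ≤ ε := by
          rw [hYcard]
          exact PCAux.final_arith n d t hd hdn ht ε hε0 hε1 htlb
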